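/- arXiv:1610.09051 — 2 statements merged into one kernel-verified Lean document; each statement's English description precedes it below -/
import Mathlib

section
/- Let Γ = (V,E) be a connected graph, G a group acting linearly on a d-dimensional vector space F, ρ an edge potential, n = |V|. View an F-valued vertex potential s : V → F as a vector [s] in F^V ≅ K^{nd}. Then synchronization solutions s¹,…,s^k are linearly independent in the fibrewise sense (i.e., s¹_i,…,s^k_i linearly independent in F at each vertex i) if and only if [s¹],…,[s^k] are linearly independent as elements of F^V. -/
/-- synchronization solutions `s¹, …, sᵏ` are fibrewise linearly
independent (at every vertex) iff they are linearly independent as elements of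
the product space `F^V` of functions `V → F`. -/
theorem sync_solutions_linearIndependent_iff_global {V G K F : Type*} [Group G]
    [Field K] [AddCommGroup F] [Module K F] {Γ : SimpleGraph V}
    (hconn : Γ.Connected) (τ : G →* (F ≃ₗ[K] F)) (ρ : V → V → G)
    (hsym : ∀ i j, Γ.Adj i j → ρ i j = (ρ j i)⁻¹)
    {k : ℕ} (s : Fin k → V → F)
    (hsol : ∀ (m : Fin k) (i j : V), Γ.Adj i j → s m i = τ (ρ i j) (s m j)) :
    (∀ i : V, LinearIndependent K (fun m : Fin k => s m i)) ↔
      LinearIndependent K s := by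
  constructor
  · intro h
    have : Nonempty V := hconn.nonempty
    exact LinearIndependent.of_comp (LinearMap.proj (Classical.arbitrary V))
      (h (Classical.arbitrary V))
  · intro h i
    rw [Fintype.linearIndependent_iff] at h ⊢
    intro g hg
    apply h
    funext j
    -- show the linear combination vanishes at every vertex j
    have key : ∀ j : V, ∑ m, g m • s m j = 0 := by
      intro j
      obtain ⟨w⟩ := hconn i j
      induction w with
      | nil => exact hg
      | cons hab w ih =>
        rename_i a b c
        apply ih
        have : (τ (ρ a b)) (∑ m, g m • s m b) = 0 := by
          rw [map_sum]
          simp only [map_smul]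
          calc ∑ m, g m • (τ (ρ a b)) (s m b) = ∑ m, g m • s m a := by
                refine Finset.sum_congr rfl fun m _ => ?_
                rw [← hsol m a b hab]
              _ = 0 := hg
        have h0 : (τ (ρ a b)) (∑ m, g m • s m b) = (τ (ρ a b)) 0 := by
          simpa using this
        exact (τ (ρ a b)).injective h0
    have := key j
    simpa using this
end

section
/- Let Γ be a finite connected weighted graph, G = O(d) acting on F = ℝ^d, and ρ an edge potential. Then ρ is synchronizable over G if and only if the kernel of the graph connection Laplacian L₁ has dimension exactly d. -/
open Finset InnerProductSpace

/-- The graph connection Laplacian: `(L₁ f)_i = d_i f_i − Σ_{j ~ i} w_{ij} ρ_{ij} f_j`. -/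
noncomputable def connectionLaplacian {V F : Type*} [Fintype V]
    [NormedAddCommGroup F] [InnerProductSpace ℝ F]
    (Γ : SimpleGraph V) [DecidableRel Γ.Adj] (w : V → V → ℝ)
    (ρ : V → V → (F ≃ₗᵢ[ℝ] F)) (f : V → F) : V → F :=
  fun i => (∑ j ∈ Γ.neighborFinset i, w i j) • f i -
    ∑ j ∈ Γ.neighborFinset i, w i j • ρ i j (f j)

section Aux

variable {V : Type*} [Fintype V] {d : ℕ}
  (Γ : SimpleGraph V) [DecidableRel Γ.Adj]
  (ρ : V → V → (EuclideanSpace ℝ (Fin d) ≃ₗᵢ[ℝ] EuclideanSpace ℝ (Fin d)))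

/-- The submodule of functions compatible with `ρ` along all edges. -/
def syncKer : Submodule ℝ (V → EuclideanSpace ℝ (Fin d)) where
  carrier := {f | ∀ i j, Γ.Adj i j → f i = ρ i j (f j)}
  add_mem' := fun hf hg i j hij => by
    simp only [Pi.add_apply, hf i j hij, hg i j hij, map_add]
  zero_mem' := fun i j hij => by simp
  smul_mem' := fun c f hf i j hij => by
    simp only [Pi.smul_apply, hf i j hij, map_smul]

lemma sum_neighbor_comm (A : V → V → ℝ) :
    ∑ i, ∑ j ∈ Γ.neighborFinset i, A i j = ∑ i, ∑ j ∈ Γ.neighborFinset i, A j i := by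
  have h : ∀ (B : V → V → ℝ), ∑ i, ∑ j ∈ Γ.neighborFinset i, B i j
      = ∑ i, ∑ j, if Γ.Adj i j then B i j else 0 := by
    intro B
    refine Finset.sum_congr rfl fun i _ => ?_
    rw [SimpleGraph.neighborFinset_eq_filter, Finset.sum_filter]
  rw [h, h, Finset.sum_comm]
  refine Finset.sum_congr rfl fun i _ => Finset.sum_congr rfl fun j _ => ?_
  by_cases hij : Γ.Adj i j
  · simp [hij, hij.symm]
  · have h2 : ¬ Γ.Adj j i := fun h' => hij h'.symm
    simp [hij, h2]

variable (w : V → V → ℝ)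

lemma ker_iff (hwsym : ∀ i j, w i j = w j i) (hwpos : ∀ i j, Γ.Adj i j → 0 < w i j)
    (f : V → EuclideanSpace ℝ (Fin d)) :
    connectionLaplacian Γ w ρ f = 0 ↔ f ∈ syncKer Γ ρ := by
  constructor
  · intro hL
    -- inner product of the Laplacian against f vanishes at every vertex
    have hinner : ∀ i, ∑ j ∈ Γ.neighborFinset i, w i j * ⟪f i, ρ i j (f j)⟫_ℝ
        = ∑ j ∈ Γ.neighborFinset i, w i j * ‖f i‖ ^ 2 := by
      intro i
      have h0 : connectionLaplacian Γ w ρ f i = 0 := by rw [hL]; rfl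
      have h1 : ⟪f i, connectionLaplacian Γ w ρ f i⟫_ℝ = 0 := by rw [h0, inner_zero_right]
      simp only [connectionLaplacian, inner_sub_right, inner_sum, real_inner_smul_right,
        real_inner_self_eq_norm_sq] at h1
      have h2 : ∑ j ∈ Γ.neighborFinset i, w i j * ‖f i‖ ^ 2
          = (∑ j ∈ Γ.neighborFinset i, w i j) * ‖f i‖ ^ 2 := (Finset.sum_mul _ _ _).symm
      rw [h2]
      linarith
    have hS : ∑ i, ∑ j ∈ Γ.neighborFinset i, w i j * ‖f i - ρ i j (f j)‖ ^ 2 = 0 := by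
      have expand : ∑ i, ∑ j ∈ Γ.neighborFinset i, w i j * ‖f i - ρ i j (f j)‖ ^ 2
          = ∑ i, ∑ j ∈ Γ.neighborFinset i,
              (w i j * ‖f i‖ ^ 2 + w i j * ‖f j‖ ^ 2
                - 2 * (w i j * ⟪f i, ρ i j (f j)⟫_ℝ)) := by
        refine Finset.sum_congr rfl fun i _ => Finset.sum_congr rfl fun j _ => ?_
        have : ‖f i - ρ i j (f j)‖ ^ 2
            = ‖f i‖ ^ 2 - 2 * ⟪f i, ρ i j (f j)⟫_ℝ + ‖ρ i j (f j)‖ ^ 2 :=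
          norm_sub_sq_real _ _
        rw [this, (ρ i j).norm_map]
        ring
      have e1 : ∑ i, ∑ j ∈ Γ.neighborFinset i, w i j * ‖f j‖ ^ 2
          = ∑ i, ∑ j ∈ Γ.neighborFinset i, w i j * ‖f i‖ ^ 2 := by
        rw [sum_neighbor_comm Γ (fun i j => w i j * ‖f j‖ ^ 2)]
        refine Finset.sum_congr rfl fun i _ => Finset.sum_congr rfl fun j _ => ?_
        rw [hwsym j i]
      rw [expand]
      simp only [Finset.sum_add_distrib, Finset.sum_sub_distrib]
      rw [e1]
      have e2 : ∑ i, ∑ j ∈ Γ.neighborFinset i, 2 * (w i j * ⟪f i, ρ i j (f j)⟫_ℝ)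
          = 2 * ∑ i, ∑ j ∈ Γ.neighborFinset i, w i j * ⟪f i, ρ i j (f j)⟫_ℝ := by
        rw [Finset.mul_sum]
        exact Finset.sum_congr rfl fun i _ => (Finset.mul_sum _ _ _).symm
      rw [e2]
      have e3 : ∑ i, ∑ j ∈ Γ.neighborFinset i, w i j * ⟪f i, ρ i j (f j)⟫_ℝ
          = ∑ i, ∑ j ∈ Γ.neighborFinset i, w i j * ‖f i‖ ^ 2 :=
        Finset.sum_congr rfl fun i _ => hinner i
      rw [e3]
      ring
    -- each summand is nonnegative, so all vanish
    intro i j hij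
    have hterm : ∀ i, ∀ j ∈ Γ.neighborFinset i, 0 ≤ w i j * ‖f i - ρ i j (f j)‖ ^ 2 := by
      intro i j hj
      exact mul_nonneg (le_of_lt (hwpos i j ((Γ.mem_neighborFinset i j).mp hj)))
        (sq_nonneg _)
    have hzero : ∀ i, ∀ j ∈ Γ.neighborFinset i, w i j * ‖f i - ρ i j (f j)‖ ^ 2 = 0 := by
      have houter := (Finset.sum_eq_zero_iff_of_nonneg
        (fun i _ => Finset.sum_nonneg (hterm i))).mp hS
      intro i j hj
      exact (Finset.sum_eq_zero_iff_of_nonneg (hterm i)).mp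
        (houter i (Finset.mem_univ i)) j hj
    have := hzero i j ((Γ.mem_neighborFinset i j).mpr hij)
    have hw := hwpos i j hij
    have hnorm : ‖f i - ρ i j (f j)‖ ^ 2 = 0 := by
      rcases mul_eq_zero.mp this with h | h
      · exact absurd h (ne_of_gt hw)
      · exact h
    have : f i - ρ i j (f j) = 0 := by
      rwa [pow_eq_zero_iff (two_ne_zero), norm_eq_zero] at hnorm
    exact sub_eq_zero.mp this
  · intro hf
    funext i
    simp only [connectionLaplacian, Pi.zero_apply]
    have : ∀ j ∈ Γ.neighborFinset i, w i j • (ρ i j) (f j) = w i j • f i := by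
      intro j hj
      rw [← hf i j ((Γ.mem_neighborFinset i j).mp hj)]
    rw [Finset.sum_congr rfl this, ← Finset.sum_smul, sub_self]

lemma syncKer_norm_eq (hconn : Γ.Connected) {f : V → EuclideanSpace ℝ (Fin d)}
    (hf : f ∈ syncKer Γ ρ) (i j : V) : ‖f i‖ = ‖f j‖ := by
  obtain ⟨p⟩ := hconn i j
  induction p with
  | nil => rfl
  | @cons u v w h p ih => rw [hf _ _ h, (ρ u v).norm_map]; exact ih

/-- Evaluation at a vertex, as a linear map on the compatibility kernel. -/
noncomputable def evalAt (v₀ : V) : syncKer Γ ρ →ₗ[ℝ] EuclideanSpace ℝ (Fin d) :=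
  (LinearMap.proj v₀).comp (syncKer Γ ρ).subtype

lemma evalAt_injective (hconn : Γ.Connected) (v₀ : V) :
    Function.Injective (evalAt Γ ρ v₀) := by
  rw [injective_iff_map_eq_zero]
  intro f hf
  have h2 : f.1 v₀ = 0 := hf
  have hzero : ∀ i, f.1 i = 0 := by
    intro i
    have h1 : ‖f.1 i‖ = ‖f.1 v₀‖ := syncKer_norm_eq Γ ρ hconn f.2 i v₀
    rwa [h2, norm_zero, norm_eq_zero] at h1
  exact Subtype.ext (funext hzero)

end Aux

/-- for an `O(d)`-valued edge potential on a finite connected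
weighted graph, the edge potential is synchronizable iff the kernel of the graph
connection Laplacian has dimension exactly `d`. -/
theorem synchronizable_iff_kernel_dim_eq {V : Type*} [Fintype V] {d : ℕ}
    (Γ : SimpleGraph V) [DecidableRel Γ.Adj] (hconn : Γ.Connected)
    (w : V → V → ℝ) (hwsym : ∀ i j, w i j = w j i)
    (hwpos : ∀ i j, Γ.Adj i j → 0 < w i j)
    (ρ : V → V → (EuclideanSpace ℝ (Fin d) ≃ₗᵢ[ℝ] EuclideanSpace ℝ (Fin d)))
    (hρsym : ∀ i j, Γ.Adj i j → ρ j i = (ρ i j).symm) :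
    (∃ g : V → (EuclideanSpace ℝ (Fin d) ≃ₗᵢ[ℝ] EuclideanSpace ℝ (Fin d)),
        ∀ i j, Γ.Adj i j → ∀ x, g i x = ρ i j (g j x)) ↔
      Module.finrank ℝ
        (Submodule.span ℝ {f : V → EuclideanSpace ℝ (Fin d) |
          connectionLaplacian Γ w ρ f = 0}) = d := by
  classical
  have hset : {f : V → EuclideanSpace ℝ (Fin d) | connectionLaplacian Γ w ρ f = 0}
      = (syncKer Γ ρ : Set (V → EuclideanSpace ℝ (Fin d))) :=
    Set.ext fun f => ker_iff Γ ρ w hwsym hwpos f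
  rw [hset, Submodule.span_eq]
  obtain ⟨v₀⟩ := hconn.nonempty
  constructor
  · rintro ⟨g, hg⟩
    have hsurj : Function.Surjective (evalAt Γ ρ v₀) := by
      intro x
      refine ⟨⟨fun i => g i ((g v₀).symm x), fun i j hij => hg i j hij _⟩, ?_⟩
      show g v₀ ((g v₀).symm x) = x
      exact (g v₀).apply_symm_apply x
    have e := LinearEquiv.ofBijective (evalAt Γ ρ v₀)
      ⟨evalAt_injective Γ ρ hconn v₀, hsurj⟩
    rw [e.finrank_eq, finrank_euclideanSpace_fin]
  · intro hdim
    have hinj := evalAt_injective Γ ρ hconn v₀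
    have hsurj : Function.Surjective (evalAt Γ ρ v₀) := by
      rw [← LinearMap.range_eq_top]
      apply Submodule.eq_top_of_finrank_eq
      rw [LinearMap.finrank_range_of_inj hinj, hdim, finrank_euclideanSpace_fin]
    let e := LinearEquiv.ofBijective (evalAt Γ ρ v₀) ⟨hinj, hsurj⟩
    have hval : ∀ x, (e.symm x).1 v₀ = x := fun x => e.apply_symm_apply x
    have hnorm : ∀ (i : V) x, ‖(e.symm x).1 i‖ = ‖x‖ := by
      intro i x
      rw [syncKer_norm_eq Γ ρ hconn (e.symm x).2 i v₀, hval]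
    let T : V → (EuclideanSpace ℝ (Fin d) →ₗᵢ[ℝ] EuclideanSpace ℝ (Fin d)) :=
      fun i => ⟨(LinearMap.proj i).comp ((syncKer Γ ρ).subtype.comp
        (e.symm : EuclideanSpace ℝ (Fin d) →ₗ[ℝ] syncKer Γ ρ)), fun x => hnorm i x⟩
    refine ⟨fun i => (T i).toLinearIsometryEquiv rfl, fun i j hij x => ?_⟩
    show T i x = ρ i j (T j x)
    exact (e.symm x).2 i j hij
end
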